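/- Let ε̂ : ℤ³ → ℝ be absolutely summable with ε̂(−s) = ε̂(s) for all s and ε̂(s) ≤ 0 for all s ≠ 0, and define ε : ℝ³ → ℝ by ε(p) = Σ_{s∈ℤ³} ε̂(s)·cos⟨p,s⟩. Assume ε has a unique minimum at the origin, i.e. ε(p) > ε(0) for every p ∈ ℝ³ \ (2πℤ)³. Then for every q ∈ ℝ³ \ (2πℤ)³ the strict inequality ε(p) + ε(q) > (ε(p+q) + ε(p−q))/2 + ε(0) holds for Lebesgue-almost every p ∈ ℝ³. -/

import Mathlib

open MeasureTheory Real

/-- strict inequality for Lévy–Khinchin type dispersion relations. -/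
theorem threshold_dispersion_strict_inequality
    (εhat : (Fin 3 → ℤ) → ℝ)
    (hsum : Summable fun s => |εhat s|)
    (hsymm : ∀ s, εhat (-s) = εhat s)
    (hneg : ∀ s, s ≠ 0 → εhat s ≤ 0)
    (ε : (Fin 3 → ℝ) → ℝ)
    (hε : ∀ p, ε p = ∑' s : Fin 3 → ℤ, εhat s * Real.cos (∑ i, p i * (s i : ℝ)))
    (hmin : ∀ p : Fin 3 → ℝ, ¬ (∀ i, ∃ n : ℤ, p i = 2 * π * n) → ε 0 < ε p)
    (q : Fin 3 → ℝ) (hq : ¬ (∀ i, ∃ n : ℤ, q i = 2 * π * n)) :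
    ∀ᵐ p : Fin 3 → ℝ ∂volume,
      ε p + ε q > (ε (p + q) + ε (p - q)) / 2 + ε 0 := by
  classical
  -- Abbreviation for the phase
  set A : (Fin 3 → ℤ) → (Fin 3 → ℝ) → ℝ := fun s x => ∑ i, x i * (s i : ℝ) with hA
  -- linearity of the phase
  have hAadd : ∀ s x y, A s (x + y) = A s x + A s y := by
    intro s x y
    simp only [hA, Pi.add_apply, add_mul]
    rw [Finset.sum_add_distrib]
  have hAsub : ∀ s x y, A s (x - y) = A s x - A s y := by
    intro s x y
    simp only [hA, Pi.sub_apply, sub_mul]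
    rw [Finset.sum_sub_distrib]
  have hAzero : ∀ s, A s (0 : Fin 3 → ℝ) = 0 := by
    intro s; simp [hA]
  have hA0 : ∀ x, A (0 : Fin 3 → ℤ) x = 0 := by
    intro x; simp [hA]
  -- summability of each series
  have hS : ∀ x : Fin 3 → ℝ, Summable fun s => εhat s * Real.cos (A s x) := by
    intro x
    apply Summable.of_norm_bounded hsum
    intro s
    rw [Real.norm_eq_abs, abs_mul]
    calc |εhat s| * |Real.cos (A s x)| ≤ |εhat s| * 1 := by
          exact mul_le_mul_of_nonneg_left (Real.abs_cos_le_one _) (abs_nonneg _)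
      _ = |εhat s| := mul_one _
  have hεA : ∀ x, ε x = ∑' s, εhat s * Real.cos (A s x) := hε
  -- Find s₀ with εhat s₀ < 0 and cos (A s₀ q) < 1
  have hq' : ε 0 < ε q := hmin q hq
  have hD : HasSum (fun s => εhat s * Real.cos (A s q) - εhat s * Real.cos (A s 0))
      (ε q - ε 0) := by
    rw [hεA q, hεA 0]
    exact (hS q).hasSum.sub (hS 0).hasSum
  have hDpos : 0 < ∑' s, (εhat s * Real.cos (A s q) - εhat s * Real.cos (A s 0)) := by
    rw [hD.tsum_eq]; linarith
  have hex : ∃ s₀ : Fin 3 → ℤ,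
      εhat s₀ * Real.cos (A s₀ q) - εhat s₀ * Real.cos (A s₀ 0) ≠ 0 := by
    by_contra hcon
    push_neg at hcon
    have : (∑' s, (εhat s * Real.cos (A s q) - εhat s * Real.cos (A s 0))) = 0 := by
      have : (fun s => εhat s * Real.cos (A s q) - εhat s * Real.cos (A s 0))
          = fun _ => (0 : ℝ) := funext hcon
      rw [this, tsum_zero]
    linarith
  obtain ⟨s₀, hs₀⟩ := hex
  have hcos0 : Real.cos (A s₀ (0 : Fin 3 → ℝ)) = 1 := by rw [hAzero]; exact Real.cos_zero
  rw [hcos0, mul_one] at hs₀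
  have hs₀ne : s₀ ≠ 0 := by
    intro h
    apply hs₀
    rw [h, hA0, Real.cos_zero, mul_one, sub_self]
  have hεneg : εhat s₀ < 0 := by
    rcases lt_or_eq_of_le (hneg s₀ hs₀ne) with h | h
    · exact h
    · exfalso; apply hs₀; rw [h]; ring
  have hcosq : Real.cos (A s₀ q) < 1 := by
    rcases lt_or_eq_of_le (Real.cos_le_one (A s₀ q)) with h | h
    · exact h
    · exfalso; apply hs₀; rw [h, mul_one, sub_self]
  -- The linear functional p ↦ A s₀ p
  set L : (Fin 3 → ℝ) →ₗ[ℝ] ℝ :=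
    { toFun := fun x => A s₀ x
      map_add' := fun x y => hAadd s₀ x y
      map_smul' := by
        intro c x
        simp only [hA, Pi.smul_apply, smul_eq_mul, RingHom.id_apply, Finset.mul_sum, mul_assoc] }
    with hL
  obtain ⟨i₀, hi₀⟩ : ∃ i, s₀ i ≠ 0 := by
    by_contra hcon
    push_neg at hcon
    exact hs₀ne (funext hcon)
  have hLv : L (Pi.single i₀ 1) ≠ 0 := by
    have : L (Pi.single i₀ 1) = (s₀ i₀ : ℝ) := by
      simp only [hL, LinearMap.coe_mk, AddHom.coe_mk, hA]
      rw [Finset.sum_eq_single i₀]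
      · simp
      · intro b _ hb; simp [Pi.single_apply, hb]
      · simp
    rw [this]
    exact_mod_cast hi₀
  have hker : (LinearMap.ker L : Submodule ℝ (Fin 3 → ℝ)) ≠ ⊤ := by
    intro h
    apply hLv
    have : Pi.single i₀ 1 ∈ LinearMap.ker L := by rw [h]; trivial
    exact this
  have hkernull : volume (LinearMap.ker L : Set (Fin 3 → ℝ)) = 0 :=
    Measure.addHaar_submodule volume _ hker
  -- each level set of L is null
  have hlevel : ∀ c : ℝ, volume {p : Fin 3 → ℝ | L p = c} = 0 := by
    intro c
    rcases Set.eq_empty_or_nonempty {p : Fin 3 → ℝ | L p = c} with h | ⟨p₀, hp₀⟩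
    · rw [h]; exact measure_empty
    · have hset : {p : Fin 3 → ℝ | L p = c}
          = (fun x => x + (-p₀)) ⁻¹' (LinearMap.ker L : Set (Fin 3 → ℝ)) := by
        ext x
        simp only [Set.mem_setOf_eq, Set.mem_preimage, SetLike.mem_coe, LinearMap.mem_ker,
          map_add, map_neg]
        constructor
        · intro hx; rw [hx, hp₀]; ring
        · intro hx
          have : L x = L p₀ := by linarith
          rw [this, hp₀]
      rw [hset, measure_preimage_add_right]
      exact hkernull
  -- a.e. p, cos (A s₀ p) ≠ 1
  have hae : ∀ᵐ p : Fin 3 → ℝ ∂volume, Real.cos (A s₀ p) ≠ 1 := by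
    rw [ae_iff]
    push_neg
    have hsub : {p : Fin 3 → ℝ | Real.cos (A s₀ p) = 1}
        ⊆ ⋃ n : ℤ, {p : Fin 3 → ℝ | L p = (n : ℝ) * (2 * π)} := by
      intro p hp
      rw [Set.mem_setOf_eq, Real.cos_eq_one_iff] at hp
      obtain ⟨n, hn⟩ := hp
      exact Set.mem_iUnion.2 ⟨n, hn.symm⟩
    exact measure_mono_null hsub (measure_iUnion_null fun n => hlevel _)
  filter_upwards [hae] with p hp
  have hcosp : Real.cos (A s₀ p) < 1 :=
    lt_of_le_of_ne (Real.cos_le_one _) hp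
  -- the combined series
  set T : (Fin 3 → ℤ) → ℝ := fun s =>
    (εhat s * Real.cos (A s p) + εhat s * Real.cos (A s q))
      - ((εhat s * Real.cos (A s (p + q)) + εhat s * Real.cos (A s (p - q))) / 2
          + εhat s * Real.cos (A s 0)) with hT
  have hHasSum : HasSum T
      ((ε p + ε q) - ((ε (p + q) + ε (p - q)) / 2 + ε 0)) := by
    rw [hεA p, hεA q, hεA (p + q), hεA (p - q), hεA 0]
    exact ((hS p).hasSum.add (hS q).hasSum).sub
      ((((hS (p + q)).hasSum.add ((hS (p - q)).hasSum)).div_const 2).add (hS 0).hasSum)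
  have hTform : ∀ s, T s = (-εhat s) * ((1 - Real.cos (A s p)) * (1 - Real.cos (A s q))) := by
    intro s
    rw [hT]
    simp only
    rw [hAadd s p q, hAsub s p q, hAzero s, Real.cos_add, Real.cos_sub, Real.cos_zero]
    ring
  have hTnonneg : ∀ s, 0 ≤ T s := by
    intro s
    rw [hTform s]
    rcases eq_or_ne s 0 with h | h
    · subst h
      rw [hA0, Real.cos_zero]
      ring_nf
      simp [hA0]
    · have h1 : 0 ≤ -εhat s := by linarith [hneg s h]
      have h2 : 0 ≤ 1 - Real.cos (A s p) := by linarith [Real.cos_le_one (A s p)]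
      have h3 : 0 ≤ 1 - Real.cos (A s q) := by linarith [Real.cos_le_one (A s q)]
      positivity
  have hTs₀ : 0 < T s₀ := by
    rw [hTform s₀]
    have h1 : 0 < -εhat s₀ := by linarith
    have h2 : 0 < 1 - Real.cos (A s₀ p) := by linarith
    have h3 : 0 < 1 - Real.cos (A s₀ q) := by linarith
    positivity
  have hpos : 0 < (ε p + ε q) - ((ε (p + q) + ε (p - q)) / 2 + ε 0) := by
    rw [← hHasSum.tsum_eq]
    exact Summable.tsum_pos hHasSum.summable hTnonneg s₀ hTs₀
  linarith
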